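/- Let s ≥ 1 be an integer, and let E and F be finite subsets of ℤ^s such that O(E) ⊆ F, where O(E) = ∪_{i=1}^s (E + e_i). Suppose |F| ≤ s²/4. Then |F| ≥ (s/2)|E|. -/

import Mathlib

lemma aux_single_inj {s : ℕ} {i j : Fin s} (h : (Pi.single i 1 : Fin s → ℤ) = Pi.single j 1) : i = j := by
  by_contra h'
  simpa [Pi.single_eq_same, Pi.single_eq_of_ne (Ne.symm h')] using congrFun h j

lemma aux_key {s : ℕ} {x x' : Fin s → ℤ} {i j i' j' : Fin s} (hxx : x ≠ x')
    (h1 : x + Pi.single i 1 = x' + Pi.single j 1)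
    (h2 : x + Pi.single i' 1 = x' + Pi.single j' 1) : i = i' ∧ j = j' := by
  have hij : i ≠ j := by
    intro he
    subst he
    exact hxx (add_right_cancel h1)
  have hk : ∀ k : Fin s, (if k = i then (1:ℤ) else 0) + (if k = j' then 1 else 0)
      = (if k = j then 1 else 0) + (if k = i' then 1 else 0) := by
    intro k
    have e1 := congrFun h1 k
    have e2 := congrFun h2 k
    simp only [Pi.add_apply, Pi.single_apply] at e1 e2
    split_ifs at e1 e2 ⊢ <;> omega
  constructor
  · by_contra hne
    have hh := hk i
    rw [if_pos rfl, if_neg hij, if_neg hne] at hh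
    split_ifs at hh <;> omega
  · by_contra hne
    have hh := hk j
    rw [if_neg (Ne.symm hij), if_neg hne, if_pos rfl] at hh
    split_ifs at hh <;> omega

lemma aux_arith (S M N : ℝ) (hS : 1 ≤ S) (hM : 1 ≤ M) (hN : 0 ≤ N)
    (hF : N ≤ S ^ 2 / 4) (hMS : M ≤ S ∨ S + 1 ≤ M)
    (hCS : (M * S) ^ 2 ≤ N * ((M * M - M) + M * S)) : S / 2 * M ≤ N := by
  rcases hMS with hms | hms
  · have ha : (M * M - M + M * S) ≤ 2 * (M * S) := by
      nlinarith [mul_le_mul_of_nonneg_left hms (le_trans zero_le_one hM)]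
    have hc : (M * S) ^ 2 ≤ N * (2 * (M * S)) :=
      le_trans hCS (mul_le_mul_of_nonneg_left ha hN)
    have ht1 : (1:ℝ) ≤ M * S := by nlinarith
    nlinarith [hc, ht1]
  · exfalso
    have h4 : (M * M - M) + M * S ≤ 2 * (M * M) := by nlinarith
    have h5 : N * ((M * M - M) + M * S) ≤ N * (2 * (M * M)) :=
      mul_le_mul_of_nonneg_left h4 hN
    have h6 : N * (M * M) ≤ (S ^ 2 / 4) * (M * M) :=
      mul_le_mul_of_nonneg_right hF (by positivity)
    have h7 : (1 : ℝ) ≤ S * M := by nlinarith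
    nlinarith [hCS, h5, h6, h7]

theorem stmt_7 (s : ℕ) (hs : 1 ≤ s) (E F : Finset (Fin s → ℤ))
    (hO : ∀ x ∈ E, ∀ i : Fin s, x + Pi.single i 1 ∈ F)
    (hF : (F.card : ℝ) ≤ (s : ℝ) ^ 2 / 4) :
    ((s : ℝ) / 2) * E.card ≤ (F.card : ℝ) := by
  classical
  rcases Nat.eq_zero_or_pos E.card with hE0 | hEpos
  · rw [hE0]
    simp only [Nat.cast_zero, mul_zero]
    positivity
  set m := E.card with hm
  set N := F.card with hN
  set f : (Fin s → ℤ) × Fin s → (Fin s → ℤ) := fun p => p.1 + Pi.single p.2 1 with hf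
  set P : Finset ((Fin s → ℤ) × Fin s) := E ×ˢ (Finset.univ : Finset (Fin s)) with hP
  have hfP : ∀ p ∈ P, f p ∈ F := by
    rintro ⟨x, i⟩ hp
    rw [hP, Finset.mem_product] at hp
    exact hO x hp.1 i
  have hPcard : P.card = m * s := by
    rw [hP, Finset.card_product, Finset.card_univ, Fintype.card_fin]
  -- first moment
  have hsum : ∑ y ∈ F, (P.filter fun p => f p = y).card = m * s := by
    rw [← Finset.card_eq_sum_card_fiberwise hfP, hPcard]
  -- pair set
  set R : Finset (((Fin s → ℤ) × Fin s) × ((Fin s → ℤ) × Fin s)) :=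
    (P ×ˢ P).filter (fun z => f z.1 = f z.2) with hR
  have hRfib : ∀ y ∈ F, R.filter (fun z => f z.1 = y)
      = (P.filter fun p => f p = y) ×ˢ (P.filter fun p => f p = y) := by
    intro y _
    ext z
    simp only [hR, Finset.mem_filter, Finset.mem_product]
    constructor
    · rintro ⟨⟨⟨h1, h2⟩, h3⟩, h4⟩
      exact ⟨⟨h1, h4⟩, h2, h3.symm.trans h4⟩
    · rintro ⟨⟨h1, h4⟩, h2, h5⟩
      exact ⟨⟨⟨h1, h2⟩, h4.trans h5.symm⟩, h4⟩
  have hRF : ∀ z ∈ R, f z.1 ∈ F := by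
    intro z hz
    rw [hR, Finset.mem_filter, Finset.mem_product] at hz
    exact hfP _ hz.1.1
  have hRcard : R.card = ∑ y ∈ F, ((P.filter fun p => f p = y).card) ^ 2 := by
    rw [Finset.card_eq_sum_card_fiberwise hRF]
    refine Finset.sum_congr rfl fun y hy => ?_
    rw [hRfib y hy, Finset.card_product, sq]
  -- diagonal
  have hdiagset : (R.filter fun z => z.1 = z.2) = P.image (fun p => (p, p)) := by
    ext z
    simp only [Finset.mem_filter, hR, Finset.mem_product, Finset.mem_image]
    constructor
    · rintro ⟨⟨⟨h1, h2⟩, h3⟩, h4⟩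
      refine ⟨z.1, h1, ?_⟩
      obtain ⟨a, b⟩ := z
      cases h4
      rfl
    · rintro ⟨p, hp, rfl⟩
      exact ⟨⟨⟨hp, hp⟩, rfl⟩, rfl⟩
  have hdiag : (R.filter fun z => z.1 = z.2).card = m * s := by
    rw [hdiagset, Finset.card_image_of_injective _ (fun a b h => congrArg Prod.fst h), hPcard]
  -- off-diagonal injection
  have hoff : (R.filter fun z => ¬ z.1 = z.2).card ≤ m * m - m := by
    rw [← Finset.offDiag_card]
    apply Finset.card_le_card_of_injOn (fun z => (z.1.1, z.2.1))
    · intro z hz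
      rw [Finset.mem_coe, Finset.mem_filter, hR, Finset.mem_filter, Finset.mem_product, hP] at hz
      obtain ⟨⟨⟨hz1, hz2⟩, hfz⟩, hne⟩ := hz
      rw [Finset.mem_product] at hz1 hz2
      rw [Finset.mem_coe, Finset.mem_offDiag]
      refine ⟨hz1.1, hz2.1, ?_⟩
      intro hx
      apply hne
      have : (Pi.single z.1.2 1 : Fin s → ℤ) = Pi.single z.2.2 1 := by
        have := hfz
        simp only [hf] at this
        rw [hx] at this
        exact add_left_cancel this
      exact Prod.ext hx (aux_single_inj this)
    · intro a ha b hb hab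
      simp only [Finset.coe_filter, Set.mem_setOf_eq, hR, Finset.mem_filter,
        Finset.mem_product] at ha hb
      obtain ⟨⟨_, hfa⟩, hnea⟩ := ha
      obtain ⟨⟨_, hfb⟩, hneb⟩ := hb
      have hab' : (a.1.1, a.2.1) = (b.1.1, b.2.1) := hab
      have hx1 : a.1.1 = b.1.1 := (Prod.ext_iff.1 hab').1
      have hx2 : a.2.1 = b.2.1 := (Prod.ext_iff.1 hab').2
      have hxx : a.1.1 ≠ a.2.1 := by
        intro hx
        apply hnea
        have : (Pi.single a.1.2 1 : Fin s → ℤ) = Pi.single a.2.2 1 := by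
          have := hfa
          simp only [hf] at this
          rw [hx] at this
          exact add_left_cancel this
        exact Prod.ext hx (aux_single_inj this)
      have hfa' : a.1.1 + Pi.single a.1.2 1 = a.2.1 + Pi.single a.2.2 1 := hfa
      have hfb' : a.1.1 + Pi.single b.1.2 1 = a.2.1 + Pi.single b.2.2 1 := by
        rw [hx1, hx2]; exact hfb
      obtain ⟨hi, hj⟩ := aux_key hxx hfa' hfb'
      exact Prod.ext (Prod.ext hx1 hi) (Prod.ext hx2 hj)
  -- second moment bound
  have hsq : ∑ y ∈ F, ((P.filter fun p => f p = y).card) ^ 2 ≤ (m * m - m) + m * s := by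
    rw [← hRcard, ← Finset.card_filter_add_card_filter_not (s := R)
      (p := fun z => z.1 = z.2), hdiag]
    omega
  -- Cauchy-Schwarz over ℝ
  have hCS : ((m : ℝ) * s) ^ 2 ≤ (N : ℝ) * ((m * m - m) + m * s) := by
    have h1 : ((∑ y ∈ F, ((P.filter fun p => f p = y).card : ℝ)) ^ 2)
        ≤ (N : ℝ) * ∑ y ∈ F, ((P.filter fun p => f p = y).card : ℝ) ^ 2 :=
      sq_sum_le_card_mul_sum_sq
    have h2 : ∑ y ∈ F, ((P.filter fun p => f p = y).card : ℝ) = (m : ℝ) * s := by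
      rw [← Nat.cast_sum]
      exact_mod_cast congrArg (Nat.cast : ℕ → ℝ) hsum
    have h3 : ∑ y ∈ F, ((P.filter fun p => f p = y).card : ℝ) ^ 2
        ≤ ((m : ℝ) * m - m) + m * s := by
      have := hsq
      have hmm : m ≤ m * m := Nat.le_mul_of_pos_left m hEpos
      calc ∑ y ∈ F, ((P.filter fun p => f p = y).card : ℝ) ^ 2
          = ((∑ y ∈ F, ((P.filter fun p => f p = y).card) ^ 2 : ℕ) : ℝ) := by push_cast; ring_nf
        _ ≤ (((m * m - m) + m * s : ℕ) : ℝ) := by exact_mod_cast hsq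
        _ = ((m : ℝ) * m - m) + m * s := by
            push_cast [Nat.cast_sub hmm]; ring
    calc ((m : ℝ) * s) ^ 2 = (∑ y ∈ F, ((P.filter fun p => f p = y).card : ℝ)) ^ 2 := by rw [h2]
      _ ≤ (N : ℝ) * ∑ y ∈ F, ((P.filter fun p => f p = y).card : ℝ) ^ 2 := h1
      _ ≤ (N : ℝ) * (((m : ℝ) * m - m) + m * s) := by
          apply mul_le_mul_of_nonneg_left h3 (by positivity)
  -- final arithmetic
  have hm1 : (1 : ℝ) ≤ m := by exact_mod_cast hEpos
  have hs1 : (1 : ℝ) ≤ s := by exact_mod_cast hs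
  have hN0 : (0 : ℝ) ≤ N := by positivity
  have hMS : (m : ℝ) ≤ s ∨ (s : ℝ) + 1 ≤ m := by
    rcases le_or_gt m s with h | h
    · exact Or.inl (by exact_mod_cast h)
    · exact Or.inr (by exact_mod_cast h)
  exact aux_arith (s : ℝ) (m : ℝ) (N : ℝ) hs1 hm1 hN0 hF hMS hCS
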